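/- For every natural number a, the numerical semigroup S(a) satisfies Wilf's conjecture: F(S(a)) + 1 ≤ e(S(a))·n(S(a)), where F(S(a)) is the Frobenius number of S(a), e(S(a)) is the cardinality of the minimal system of generators of S(a), and n(S(a)) is the number of elements of S(a) that are smaller than F(S(a)). -/

import Mathlib

/-- The Lucas sequence: l 0 = 2, l 1 = 1, l (n+2) = l (n+1) + l n. -/
def lucas : ℕ → ℕ
  | 0 => 2
  | 1 => 1
  | n + 2 => lucas (n + 1) + lucas n

/-- The modified (monotone) Lucas sequence: l̃ 0 = 1, l̃ 1 = 2, l̃ n = l n for n ≥ 2. -/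
def ltil : ℕ → ℕ
  | 0 => 1
  | 1 => 2
  | n + 2 => lucas (n + 2)

/-- β x : minimal number of summands in a representation of x as a sum of
modified Lucas numbers (with repetitions allowed). -/
noncomputable def beta (x : ℕ) : ℕ :=
  sInf {s : ℕ | ∃ k : ℕ, ∃ b : ℕ → ℕ,
    x = ∑ i ∈ Finset.range (k + 1), b i * ltil i ∧ s = ∑ i ∈ Finset.range (k + 1), b i}

/-- γ x : the greatest k with l̃ k ≤ x (for x ≥ 1). -/
noncomputable def gamma (x : ℕ) : ℕ := sSup {k : ℕ | ltil k ≤ x}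

/-- S a : the additive submonoid of ℕ generated by {l_a} ∪ {l_a + l_n : n ∈ ℕ}. -/
def Sset (a : ℕ) : AddSubmonoid ℕ :=
  AddSubmonoid.closure ({lucas a} ∪ {x : ℕ | ∃ n : ℕ, x = lucas a + lucas n})

/-- T a : the additive submonoid of ℕ generated by {l_a + l_n : n ∈ ℕ}. -/
def Tset (a : ℕ) : AddSubmonoid ℕ :=
  AddSubmonoid.closure {x : ℕ | ∃ n : ℕ, x = lucas a + lucas n}

/-- The Frobenius number of S a, as an integer (−1 when S a = ℕ). -/
noncomputable def frobZ (a : ℕ) : ℤ :=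
  sSup (insert (-1 : ℤ) ((fun n : ℕ => (n : ℤ)) '' {x : ℕ | x ∉ Sset a}))


section WilfHelpers

lemma lucas_pos : ∀ n, 0 < lucas n := by
  intro n
  induction n using Nat.strong_induction_on with
  | _ n ih =>
    match n with
    | 0 => norm_num [lucas]
    | 1 => norm_num [lucas]
    | n + 2 =>
      have := ih n (by omega)
      have := ih (n+1) (by omega)
      simp only [lucas]; omega

lemma ltil_pos : ∀ n, 0 < ltil n := by
  intro n
  match n with
  | 0 => norm_num [ltil]
  | 1 => norm_num [ltil]
  | n + 2 => simpa [ltil] using lucas_pos (n+2)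

lemma ltil_succ_lt (n : ℕ) : ltil n < ltil (n+1) := by
  match n with
  | 0 => norm_num [ltil]
  | 1 => norm_num [ltil, lucas]
  | n + 2 =>
    show lucas (n+2) < lucas (n+3)
    have := lucas_pos (n+1)
    simp only [lucas]; omega

lemma ltil_strictMono : StrictMono ltil := strictMono_nat_of_lt_succ ltil_succ_lt

lemma ltil_rec (n : ℕ) : ltil (n+4) = ltil (n+3) + ltil (n+2) := rfl

lemma ltil_rec' (n : ℕ) (h : 2 ≤ n) : ltil (n+2) = ltil (n+1) + ltil n := by
  obtain ⟨m, rfl⟩ : ∃ m, n = m + 2 := ⟨n - 2, by omega⟩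
  exact ltil_rec m

lemma ltil_eq_lucas (n : ℕ) (h : 2 ≤ n) : ltil n = lucas n := by
  obtain ⟨m, rfl⟩ : ∃ m, n = m + 2 := ⟨n - 2, by omega⟩
  rfl

lemma lucas_eq_ltil_exists (n : ℕ) : ∃ i, lucas n = ltil i := by
  match n with
  | 0 => exact ⟨1, rfl⟩
  | 1 => exact ⟨0, rfl⟩
  | n + 2 => exact ⟨n + 2, rfl⟩

lemma ltil_eq_lucas_exists (i : ℕ) : ∃ n, ltil i = lucas n := by
  match i with
  | 0 => exact ⟨1, rfl⟩
  | 1 => exact ⟨0, rfl⟩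
  | i + 2 => exact ⟨i + 2, rfl⟩

lemma three_le_lucas (n : ℕ) (h : 2 ≤ n) : 3 ≤ lucas n := by
  obtain ⟨m, rfl⟩ : ∃ m, n = m + 2 := ⟨n - 2, by omega⟩
  induction m with
  | zero => norm_num [lucas]
  | succ k ih =>
    have h1 := ih (by omega)
    have h2 := lucas_pos (k + 1)
    show lucas (k+2) + lucas (k+1) ≥ 3
    omega


-- pair (A_r, B_r) with lucas (a+r) = A_r * lucas a + B_r * lucas (a-1)
def fp : ℕ → ℕ × ℕ
  | 0 => (1, 0)
  | r + 1 => ((fp r).1 + (fp r).2, (fp r).1)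

lemma fp_fst_pos (r : ℕ) : 1 ≤ (fp r).1 := by
  induction r with
  | zero => norm_num [fp]
  | succ k ih => simp only [fp]; omega

lemma fp_snd_le (r : ℕ) : (fp r).2 ≤ (fp r).1 := by
  induction r with
  | zero => norm_num [fp]
  | succ k ih => simp only [fp]; omega

lemma lucas_add_one (a : ℕ) (h : 1 ≤ a) : lucas (a + 1) = lucas a + lucas (a - 1) := by
  obtain ⟨m, rfl⟩ : ∃ m, a = m + 1 := ⟨a - 1, by omega⟩
  simp only [lucas, Nat.add_sub_cancel]

lemma lucas_fp (r : ℕ) : ∀ a, 1 ≤ a →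
    lucas (a + r) = (fp r).1 * lucas a + (fp r).2 * lucas (a - 1) := by
  induction r with
  | zero => intro a _; simp [fp]
  | succ k ih =>
    intro a ha
    have h1 : a + (k + 1) = (a + 1) + k := by omega
    have h2 := ih (a + 1) (by omega)
    rw [h1, h2, lucas_add_one a ha]
    simp only [fp, Nat.add_sub_cancel]
    ring

lemma mem_Sset_of (a c : ℕ) (M : Multiset ℕ)
    (hM : ∀ y ∈ M, ∃ n, y = lucas n) (hc : Multiset.card M ≤ c) :
    c * lucas a + M.sum ∈ Sset a := by
  induction M using Multiset.induction_on generalizing c with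
  | empty =>
    simp only [Multiset.sum_zero, add_zero]
    have hm : lucas a ∈ Sset a := AddSubmonoid.subset_closure (Or.inl rfl)
    simpa [smul_eq_mul] using AddSubmonoid.nsmul_mem (S := Sset a) hm c
  | cons y M ih =>
    simp only [Multiset.card_cons] at hc
    obtain ⟨c', rfl⟩ : ∃ c', c = c' + 1 := ⟨c - 1, by omega⟩
    obtain ⟨n, rfl⟩ := hM y (Multiset.mem_cons_self _ _)
    have h1 : (c' + 1) * lucas a + (lucas n ::ₘ M).sum
        = (lucas a + lucas n) + (c' * lucas a + M.sum) := by
      simp only [Multiset.sum_cons]; ring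
    rw [h1]
    refine AddSubmonoid.add_mem _ (AddSubmonoid.subset_closure (Or.inr ⟨n, rfl⟩)) ?_
    exact ih c' (fun y hy => hM y (Multiset.mem_cons_of_mem hy)) (by omega)

lemma rep_of_mem_Sset (a x : ℕ) (hx : x ∈ Sset a) :
    ∃ (c : ℕ) (M : Multiset ℕ), Multiset.card M ≤ c ∧ (∀ y ∈ M, ∃ n, y = lucas n) ∧
      x = c * lucas a + M.sum := by
  induction hx using AddSubmonoid.closure_induction with
  | mem g hg =>
    rcases hg with hg | ⟨n, rfl⟩
    · exact ⟨1, 0, by simp, by simp, by simp [Set.mem_singleton_iff.mp hg]⟩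
    · exact ⟨1, {lucas n}, by simp, by simp, by simp⟩
  | zero => exact ⟨0, 0, by simp, by simp, by simp⟩
  | add u v _ _ hu hv =>
    obtain ⟨c1, M1, h1, p1, e1⟩ := hu
    obtain ⟨c2, M2, h2, p2, e2⟩ := hv
    refine ⟨c1 + c2, M1 + M2, by simp [Multiset.card_add]; omega, ?_, by
      simp [Multiset.sum_add, e1, e2]; ring⟩
    intro y hy
    rcases Multiset.mem_add.mp hy with h | h
    · exact p1 y h
    · exact p2 y h

lemma Sset_ge_of_ne_zero (a x : ℕ) (hx : x ∈ Sset a) (h0 : x ≠ 0) : lucas a ≤ x := by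
  obtain ⟨c, M, hc, _, rfl⟩ := rep_of_mem_Sset a x hx
  rcases Nat.eq_zero_or_pos c with rfl | hcp
  · simp_all [Multiset.card_eq_zero.mp (Nat.le_zero.mp hc)]
  · have : lucas a ≤ c * lucas a := Nat.le_mul_of_pos_left _ hcp
    omega


-- coverage: every t ≤ ltil (2c+2) - 3 is a sum of at most c ltil values
lemma coverage : ∀ (c t : ℕ), t + 3 ≤ ltil (2*c+2) →
    ∃ M : Multiset ℕ, Multiset.card M ≤ c ∧ (∀ y ∈ M, ∃ i, y = ltil i) ∧ M.sum = t := by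
  intro c
  induction c with
  | zero =>
    intro t ht
    have h3 : ltil (2*0+2) = 3 := by norm_num [ltil, lucas]
    have ht0 : t = 0 := by omega
    exact ⟨0, by simp, by simp, by simp [ht0]⟩
  | succ c ih =>
    intro t ht
    by_cases h1 : t + 3 ≤ ltil (2*c+2)
    · obtain ⟨M, hc, hp, hs⟩ := ih t h1
      exact ⟨M, by omega, hp, hs⟩
    · push_neg at h1
      rcases Nat.eq_zero_or_pos c with rfl | hcpos
      · -- c = 0 : t ≤ 4, t ≥ 1, single part
        have h4 : ltil (2*(0+1)+2) = 7 := by norm_num [ltil, lucas]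
        have h2 : ltil (2*0+2) = 3 := by norm_num [ltil, lucas]
        have ht1 : 1 ≤ t := by omega
        have ht4 : t ≤ 4 := by omega
        have : ∃ i, t = ltil i := by
          interval_cases t
          · exact ⟨0, rfl⟩
          · exact ⟨1, rfl⟩
          · exact ⟨2, rfl⟩
          · exact ⟨3, rfl⟩
        exact ⟨{t}, by simp, by simpa using this, by simp⟩
      · -- c ≥ 1
        have e1 : ltil (2*(c+1)+2) = ltil (2*c+3) + ltil (2*c+2) := by
          have := ltil_rec (2*c); convert this using 2 <;> omega
        have e2 : ltil (2*c+2) = ltil (2*c+1) + ltil (2*c) := by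
          have := ltil_rec' (2*c) (by omega); convert this using 2 <;> omega
        have e3 : 3 ≤ ltil (2*c) := by
          have h := ltil_strictMono.monotone (show 2 ≤ 2*c by omega)
          have h2 : ltil 2 = 3 := rfl
          omega
        have e4 : ltil (2*c+3) = ltil (2*c+2) + ltil (2*c+1) := by
          have := ltil_rec' (2*c+1) (by omega); convert this using 2 <;> omega
        have e5 : 2 ≤ ltil (2*c+1) := by
          have h := ltil_strictMono.monotone (show 1 ≤ 2*c+1 by omega)
          have h2 : ltil 1 = 2 := rfl
          omega
        obtain ⟨p, hpl, hple, hrem⟩ :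
            ∃ p, (∃ i0, p = ltil i0) ∧ p ≤ t ∧ t - p + 3 ≤ ltil (2*c+2) := by
          by_cases h2 : ltil (2*c+3) ≤ t
          · exact ⟨ltil (2*c+3), ⟨_, rfl⟩, h2, by omega⟩
          · push_neg at h2
            by_cases h3 : ltil (2*c+2) ≤ t
            · exact ⟨ltil (2*c+2), ⟨_, rfl⟩, h3, by omega⟩
            · push_neg at h3
              exact ⟨ltil (2*c+1), ⟨_, rfl⟩, by omega, by omega⟩
        obtain ⟨M, hmc, hmp, hms⟩ := ih (t - p) hrem
        refine ⟨p ::ₘ M, by simp only [Multiset.card_cons]; omega, ?_, ?_⟩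
        · intro y hy
          rcases Multiset.mem_cons.mp hy with rfl | hy
          · exact hpl
          · exact hmp y hy
        · simp only [Multiset.sum_cons, hms]
          omega

/-- Key lower bound: a multiset of ltil-values with indices ≤ n summing to
`D * ltil (n+1) - E * ltil n - 1` has at least `(n+1)/2 + D - E - 1` elements. -/
lemma lemmaL : ∀ (n s : ℕ) (D E : ℤ), 1 ≤ D → ∀ M : Multiset ℕ,
    Multiset.card M = s → (∀ y ∈ M, ∃ i, i ≤ n ∧ y = ltil i) →
    (M.sum : ℤ) = D * ltil (n+1) - E * ltil n - 1 →
    (((n+1)/2 : ℕ) : ℤ) + D - E - 1 ≤ Multiset.card M := by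
  intro n
  induction n using Nat.strong_induction_on with
  | _ n ihn =>
  intro s
  induction s using Nat.strong_induction_on with
  | _ s ihs =>
  intro D E hD M hcard hparts hsum
  by_cases hn4 : n < 4
  · -- base cases n = 0,1,2,3
    have hbnd : ∀ y ∈ M, y ≤ ltil n := by
      intro y hy
      obtain ⟨i, hi, rfl⟩ := hparts y hy
      exact ltil_strictMono.monotone hi
    have hsle : M.sum ≤ Multiset.card M * ltil n := by
      simpa [smul_eq_mul] using Multiset.sum_le_card_nsmul M (ltil n) hbnd
    have hslez : (M.sum : ℤ) ≤ (Multiset.card M : ℤ) * ltil n := by exact_mod_cast hsle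
    have hc0 : (0:ℤ) ≤ (Multiset.card M : ℤ) := by positivity
    have hcases : ((ltil n : ℤ) = 1 ∧ (ltil (n+1) : ℤ) = 2 ∧ (((n+1)/2 : ℕ) : ℤ) = 0)
        ∨ ((ltil n : ℤ) = 2 ∧ (ltil (n+1) : ℤ) = 3 ∧ (((n+1)/2 : ℕ) : ℤ) = 1)
        ∨ ((ltil n : ℤ) = 3 ∧ (ltil (n+1) : ℤ) = 4 ∧ (((n+1)/2 : ℕ) : ℤ) = 1)
        ∨ ((ltil n : ℤ) = 4 ∧ (ltil (n+1) : ℤ) = 7 ∧ (((n+1)/2 : ℕ) : ℤ) = 2) := by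
      interval_cases n
      · exact Or.inl ⟨by exact_mod_cast (rfl : ltil 0 = 1),
          by exact_mod_cast (rfl : ltil (0+1) = 2), by norm_num⟩
      · exact Or.inr (Or.inl ⟨by exact_mod_cast (rfl : ltil 1 = 2),
          by exact_mod_cast (rfl : ltil (1+1) = 3), by norm_num⟩)
      · exact Or.inr (Or.inr (Or.inl ⟨by exact_mod_cast (rfl : ltil 2 = 3),
          by exact_mod_cast (rfl : ltil (2+1) = 4), by norm_num⟩))
      · exact Or.inr (Or.inr (Or.inr ⟨by exact_mod_cast (rfl : ltil 3 = 4),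
          by exact_mod_cast (rfl : ltil (3+1) = 7), by norm_num⟩))
    rcases hcases with ⟨h1, h2, h3⟩ | ⟨h1, h2, h3⟩ | ⟨h1, h2, h3⟩ | ⟨h1, h2, h3⟩ <;>
      rw [h1] at hslez <;> rw [h1, h2] at hsum <;> rw [h3] <;> omega
  · obtain ⟨p, rfl⟩ : ∃ p, n = p + 4 := ⟨n - 4, by omega⟩
    have r1 : ltil (p+5) = ltil (p+4) + ltil (p+3) := ltil_rec (p+1)
    have r2 : ltil (p+4) = ltil (p+3) + ltil (p+2) := ltil_rec p
    have r1z : ((ltil (p+5) : ℤ)) = ltil (p+4) + ltil (p+3) := by exact_mod_cast r1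
    have r2z : ((ltil (p+4) : ℤ)) = ltil (p+3) + ltil (p+2) := by exact_mod_cast r2
    have l3lt4 : (ltil (p+3) : ℤ) + 1 ≤ ltil (p+4) := by
      exact_mod_cast ltil_strictMono (show p+3 < p+4 by omega)
    have l4pos : (0:ℤ) < ltil (p+4) := by exact_mod_cast ltil_pos (p+4)
    by_cases hA : ltil (p+4) ∈ M
    · -- remove a part ltil (p+4)
      obtain ⟨M', hM'⟩ := Multiset.exists_cons_of_mem hA
      subst hM'
      have hcc : Multiset.card M' < s := by
        rw [← hcard]; simp
      have hsum' : (M'.sum : ℤ) = D * ltil (p+5) - (E+1) * ltil (p+4) - 1 := by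
        have : ((ltil (p+4) ::ₘ M').sum : ℤ) = (ltil (p+4) : ℤ) + M'.sum := by
          push_cast [Multiset.sum_cons]; ring
        rw [this] at hsum; linarith
      have hparts' : ∀ y ∈ M', ∃ i, i ≤ p + 4 ∧ y = ltil i := by
        intro y hy; exact hparts y (Multiset.mem_cons_of_mem hy)
      have := ihs (Multiset.card M') hcc D (E+1) hD M' rfl hparts' hsum'
      simp only [Multiset.card_cons, Nat.cast_add, Nat.cast_one]
      linarith
    · by_cases hB : ltil (p+3) ∈ M
      · obtain ⟨M', hM'⟩ := Multiset.exists_cons_of_mem hB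
        subst hM'
        have hcc : Multiset.card M' < s := by rw [← hcard]; simp
        have hsumc : ((ltil (p+3) ::ₘ M').sum : ℤ) = (ltil (p+3) : ℤ) + M'.sum := by
          push_cast [Multiset.sum_cons]; ring
        have hparts' : ∀ y ∈ M', ∃ i, i ≤ p + 3 ∧ y = ltil i := by
          intro y hy
          obtain ⟨i, hi, rfl⟩ := hparts _ (Multiset.mem_cons_of_mem hy)
          refine ⟨i, ?_, rfl⟩
          rcases Nat.lt_or_ge i (p+4) with h | h
          · omega
          · exfalso
            have : i = p + 4 := by omega
            subst this
            exact hA (Multiset.mem_cons_of_mem hy)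
        by_cases hD2 : 2 ≤ D
        · have hsum' : (M'.sum : ℤ) = (D-1) * ltil (p+5) - (E-1) * ltil (p+4) - 1 := by
            rw [hsumc] at hsum; linarith [r1z]
          have := ihs (Multiset.card M') hcc (D-1) (E-1) (by omega) M' rfl
            (fun y hy => ⟨(hparts' y hy).choose, by
              have := (hparts' y hy).choose_spec; omega,
              (hparts' y hy).choose_spec.2⟩) hsum'
          simp only [Multiset.card_cons, Nat.cast_add, Nat.cast_one]
          linarith
        · have hD1 : D = 1 := by omega
          subst hD1
          -- show E ≤ 0
          have hmem : (ltil (p+3) : ℤ) ≤ ((ltil (p+3) ::ₘ M').sum : ℤ) := by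
            have h1 : ltil (p+3) ≤ (ltil (p+3) ::ₘ M').sum :=
              Multiset.single_le_sum (fun x _ => Nat.zero_le x) _ (Multiset.mem_cons_self _ _)
            exact_mod_cast h1
          have hE0 : E ≤ 0 := by
            by_contra hEc
            push_neg at hEc
            have h2 : (ltil (p+4) : ℤ) ≤ E * ltil (p+4) := le_mul_of_one_le_left l4pos.le hEc
            rw [hsum] at hmem
            linarith
          have hsum' : (M'.sum : ℤ) = (1 - E) * ltil (p+4) - 0 * ltil (p+3) - 1 := by
            rw [hsumc] at hsum; linarith [r1z]
          have hres := ihn (p+3) (by omega) (Multiset.card M') (1 - E) 0 (by omega) M' rfl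
            hparts' hsum'
          have hdiv : ((p+5)/2 : ℕ) ≤ ((p+4)/2 : ℕ) + 1 := by omega
          have hdivz : (((p+5)/2 : ℕ) : ℤ) ≤ (((p+4)/2 : ℕ) : ℤ) + 1 := by exact_mod_cast hdiv
          have hpp : (p + 3 + 1) = p + 4 := by omega
          rw [hpp] at hres
          have hqq : (p + 4 + 1) = p + 5 := by omega
          simp only [Multiset.card_cons, Nat.cast_add, Nat.cast_one, hqq]
          linarith
      · -- no parts of index p+4 or p+3 : descend two levels
        have hparts' : ∀ y ∈ M, ∃ i, i ≤ p + 2 ∧ y = ltil i := by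
          intro y hy
          obtain ⟨i, hi, rfl⟩ := hparts y hy
          refine ⟨i, ?_, rfl⟩
          rcases Nat.lt_or_ge i (p+3) with h | h
          · omega
          · exfalso
            rcases Nat.eq_or_lt_of_le h with h' | h'
            · exact hB (h' ▸ hy)
            · have : i = p + 4 := by omega
              exact hA (this ▸ hy)
        have hsnn : (0:ℤ) ≤ (M.sum : ℤ) := by positivity
        have hE2D : E ≤ 2*D - 1 := by
          by_contra hEc
          push_neg at hEc
          have h1 : (0:ℤ) ≤ (E - 2*D) * ltil (p+4) :=
            mul_nonneg (by omega) l4pos.le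
          have h2 : (D:ℤ) * (ltil (p+3) - ltil (p+4) + 1) ≤ 0 :=
            mul_nonpos_of_nonneg_of_nonpos (by omega) (by linarith)
          have key : (D:ℤ) * ltil (p+5) - E * ltil (p+4) - 1
              = D * ((ltil (p+3):ℤ) - ltil (p+4) + 1) - (E - 2*D) * ltil (p+4) - D - 1 := by
            rw [r1z]; ring
          rw [hsum] at hsnn
          rw [key] at hsnn
          linarith
        have hsum' : (M.sum : ℤ) = (2*D - E) * ltil (p+3) - (E - D) * ltil (p+2) - 1 := by
          rw [hsum, r1z, r2z]; ring
        have hres := ihn (p+2) (by omega) (Multiset.card M) (2*D - E) (E - D)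
          (by omega) M rfl hparts' hsum'
        have hdiv : ((p+5)/2 : ℕ) = ((p+3)/2 : ℕ) + 1 := by omega
        have hdivz : (((p+5)/2 : ℕ) : ℤ) = (((p+3)/2 : ℕ) : ℤ) + 1 := by exact_mod_cast hdiv
        have hpp : (p + 2 + 1) = p + 3 := by omega
        rw [hpp] at hres
        have hqq : (p + 4 + 1) = p + 5 := by omega
        simp only [hqq]
        linarith

lemma lucas_lt_succ (n : ℕ) (h : 1 ≤ n) : lucas n < lucas (n + 1) := by
  obtain ⟨m, rfl⟩ : ∃ m, n = m + 1 := ⟨n - 1, by omega⟩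
  have := lucas_pos m
  show lucas (m+1) < lucas (m+1) + lucas m
  omega

lemma lucas_mono (m n : ℕ) (h1 : 1 ≤ m) (h : m ≤ n) : lucas m ≤ lucas n := by
  induction n, h using Nat.le_induction with
  | base => exact le_refl _
  | succ k hk ih =>
    have := lucas_lt_succ k (by omega)
    omega

lemma multiset_decomp (la la1 : ℕ) : ∀ (Mb : Multiset ℕ),
    (∀ y ∈ Mb, ∃ A B : ℕ, B ≤ A ∧ (y:ℤ) = A * la + B * la1) →
    ∃ A B : ℕ, B ≤ A ∧ (Mb.sum : ℤ) = A * la + B * la1 := by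
  intro Mb
  induction Mb using Multiset.induction_on with
  | empty => exact fun _ => ⟨0, 0, le_refl _, by simp⟩
  | cons y N ih =>
    intro h
    obtain ⟨A, B, hAB, hs⟩ := ih (fun z hz => h z (Multiset.mem_cons_of_mem hz))
    obtain ⟨Ay, By, hABy, hy⟩ := h y (Multiset.mem_cons_self _ _)
    refine ⟨A + Ay, B + By, by omega, ?_⟩
    have hc : ((y ::ₘ N).sum : ℤ) = (y:ℤ) + N.sum := by push_cast [Multiset.sum_cons]; ring
    rw [hc, hs, hy]
    push_cast
    ring

/-- Top-level: any multiset of Lucas values summing to j * lucas a - 1 has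
at least a/2 - j + 1 elements. -/
lemma top_lemma (a : ℕ) (ha : 3 ≤ a) (j : ℤ) (hj : 1 ≤ j) (M : Multiset ℕ)
    (hM : ∀ y ∈ M, ∃ n, y = lucas n) (hsum : (M.sum : ℤ) = j * lucas a - 1) :
    ((a/2 : ℕ) : ℤ) - j + 1 ≤ Multiset.card M := by
  classical
  set Mb := M.filter (fun y => lucas a ≤ y) with hMb
  set Ms := M.filter (fun y => ¬ lucas a ≤ y) with hMs
  have hsplit : Mb + Ms = M := Multiset.filter_add_not _ M
  -- decompose big part
  have hbig : ∃ A B : ℕ, B ≤ A ∧ (Mb.sum : ℤ) = A * lucas a + B * lucas (a-1) := by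
    apply multiset_decomp
    intro y hy
    have hyM : y ∈ M := Multiset.mem_of_mem_filter hy
    have hyge : lucas a ≤ y := (Multiset.mem_filter.mp hy).2
    obtain ⟨n, rfl⟩ := hM y hyM
    have hna : a ≤ n := by
      by_contra hc
      push_neg at hc
      have h3 : 3 ≤ lucas a := three_le_lucas a (by omega)
      rcases Nat.eq_zero_or_pos n with rfl | hn
      · have : lucas 0 = 2 := rfl
        omega
      · have h4 := lucas_mono n (a-1) hn (by omega)
        have h5 := lucas_lt_succ (a-1) (by omega)
        have haa : a - 1 + 1 = a := by omega
        rw [haa] at h5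
        omega
    obtain ⟨r, rfl⟩ : ∃ r, n = a + r := ⟨n - a, by omega⟩
    refine ⟨(fp r).1, (fp r).2, fp_snd_le r, ?_⟩
    have := lucas_fp r a (by omega)
    exact_mod_cast this
  obtain ⟨A, B, hBA, hAsum⟩ := hbig
  have hsumsplit : (Mb.sum : ℤ) + Ms.sum = M.sum := by
    rw [← hsplit, Multiset.sum_add]
    push_cast
    ring
  have hsums : (Ms.sum : ℤ) = (j - A) * lucas a - (B:ℤ) * lucas (a-1) - 1 := by
    linear_combination hsumsplit + hsum - hAsum
  have h1D : 1 ≤ j - (A:ℤ) := by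
    by_contra hc
    push_neg at hc
    have hge : (0:ℤ) ≤ (Ms.sum : ℤ) := by positivity
    have hla : (0:ℤ) < lucas a := by exact_mod_cast lucas_pos a
    have hla1 : (0:ℤ) < lucas (a-1) := by exact_mod_cast lucas_pos (a-1)
    have h2 : (j - A) * (lucas a : ℤ) ≤ 0 :=
      mul_nonpos_of_nonpos_of_nonneg (by omega) hla.le
    have hBpos : (0:ℤ) ≤ (B:ℤ) * lucas (a-1) := by positivity
    linarith [hsums]
  have hparts : ∀ y ∈ Ms, ∃ i, i ≤ a - 1 ∧ y = ltil i := by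
    intro y hy
    have hyM : y ∈ M := Multiset.mem_of_mem_filter hy
    have hylt : ¬ lucas a ≤ y := (Multiset.mem_filter.mp hy).2
    obtain ⟨n, rfl⟩ := hM y hyM
    obtain ⟨i, hi⟩ := lucas_eq_ltil_exists n
    refine ⟨i, ?_, hi⟩
    by_contra hc
    push_neg at hc
    have hmono : ltil a ≤ ltil i := ltil_strictMono.monotone (by omega)
    rw [ltil_eq_lucas a (by omega), ← hi] at hmono
    exact hylt hmono
  have hzsum : (Ms.sum : ℤ) = (j - A) * ltil ((a-1)+1) - (B:ℤ) * ltil (a-1) - 1 := by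
    have e1 : a - 1 + 1 = a := by omega
    rw [e1, ltil_eq_lucas a (by omega), ltil_eq_lucas (a-1) (by omega)]
    exact hsums
  have hLL := lemmaL (a-1) (Multiset.card Ms) (j - A) (B:ℤ) h1D Ms rfl hparts hzsum
  have hcards : Multiset.card Ms ≤ Multiset.card M := by
    rw [← hsplit, Multiset.card_add]
    omega
  have e2 : ((a-1)+1) = a := by omega
  rw [e2] at hLL
  have hcz : (Multiset.card Ms : ℤ) ≤ (Multiset.card M : ℤ) := by exact_mod_cast hcards
  have hBA' : (B:ℤ) ≤ A := by exact_mod_cast hBA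
  linarith

/-- The Frobenius candidate is not in S. -/
lemma not_mem_frob (a : ℕ) (ha : 2 ≤ a) : (a/2 * lucas a - 1) ∉ Sset a := by
  intro h
  obtain ⟨c, M, hc, hp, he⟩ := rep_of_mem_Sset a _ h
  have hm3 : 3 ≤ lucas a := three_le_lucas a ha
  have hkk : 1 ≤ a/2 := by omega
  have hprod : 1 ≤ a/2 * lucas a := Nat.one_le_iff_ne_zero.mpr (by positivity)
  -- c < a/2
  have hclt : c < a/2 := by
    by_contra hcge
    push_neg at hcge
    have : a/2 * lucas a ≤ c * lucas a := Nat.mul_le_mul_right _ hcge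
    omega
  rcases Nat.eq_zero_or_pos c with rfl | hcpos
  · -- c = 0 : sum = 0, contradiction
    have h3' : 3 ≤ a/2 * lucas a := le_trans hm3 (Nat.le_mul_of_pos_left _ hkk)
    have : M = 0 := Multiset.card_eq_zero.mp (by omega)
    subst this
    simp only [Multiset.sum_zero, Nat.zero_mul, Nat.add_zero, Nat.zero_add] at he
    omega
  · -- c ≥ 1 hence a/2 ≥ 2, a ≥ 4 ≥ 3
    have ha3 : 3 ≤ a := by omega
    have hsumz : (M.sum : ℤ) = ((a/2 : ℕ) - (c:ℤ)) * lucas a - 1 := by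
      have hcast : ((a/2 * lucas a - 1 : ℕ) : ℤ) = (a/2 : ℕ) * (lucas a : ℤ) - 1 := by
        push_cast [Nat.cast_sub hprod]
        ring
      have he' : ((a/2 * lucas a - 1 : ℕ) : ℤ) = (c:ℤ) * lucas a + M.sum := by
        rw [he]; push_cast; ring
      rw [hcast] at he'
      linarith
    have hj : 1 ≤ ((a/2 : ℕ) : ℤ) - c := by
      have : (c:ℤ) < (a/2 : ℕ) := by exact_mod_cast hclt
      omega
    have := top_lemma a ha3 _ hj M hp hsumz
    have hcc : (Multiset.card M : ℤ) ≤ c := by exact_mod_cast hc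
    omega

/-- Everything at or above (a/2) * lucas a is in S. -/
lemma mem_of_ge (a : ℕ) (ha : 2 ≤ a) (x : ℕ) (hx : a/2 * lucas a ≤ x) : x ∈ Sset a := by
  have hm0 : 0 < lucas a := lucas_pos a
  have hm3 : 3 ≤ lucas a := three_le_lucas a ha
  set q := x / lucas a with hq
  obtain ⟨r, hrlt, hqr⟩ : ∃ r, r < lucas a ∧ lucas a * q + r = x :=
    ⟨x % lucas a, Nat.mod_lt _ hm0, Nat.div_add_mod x _⟩
  have hqge : a/2 ≤ q := by
    rw [hq]
    exact (Nat.le_div_iff_mul_le hm0).mpr hx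
  -- lucas a + 2 ≤ ltil (2*(a/2)+2)
  have hbound : lucas a + 2 ≤ ltil (2*(a/2)+2) := by
    rcases Nat.even_or_odd a with ⟨k, hk⟩ | ⟨k, hk⟩
    · have hidx : 2*(a/2)+2 = a + 2 := by omega
      rw [hidx, ltil_eq_lucas (a+2) (by omega)]
      have e1 : lucas (a+2) = lucas (a+1) + lucas a := rfl
      have e2 : 3 ≤ lucas (a+1) := three_le_lucas _ (by omega)
      omega
    · have hidx : 2*(a/2)+2 = a + 1 := by omega
      rw [hidx, ltil_eq_lucas (a+1) (by omega)]
      have e1 := lucas_add_one a (by omega)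
      have e2 : 3 ≤ lucas (a-1) := three_le_lucas _ (by omega)
      omega
  have hmono : ltil (2*(a/2)+2) ≤ ltil (2*q+2) := ltil_strictMono.monotone (by omega)
  obtain ⟨M, hcard, hparts, hsum⟩ := coverage q r (by omega)
  have hparts' : ∀ y ∈ M, ∃ n, y = lucas n := by
    intro y hy
    obtain ⟨i, rfl⟩ := hparts y hy
    obtain ⟨n, hn⟩ := ltil_eq_lucas_exists i
    exact ⟨n, hn⟩
  have := mem_Sset_of a q M hparts' hcard
  rw [hsum] at this
  have hxe : x = q * lucas a + r := by rw [mul_comm]; omega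
  rw [hxe]
  exact this

/-- Value of the Frobenius number for a ≥ 2. -/
lemma frob_eq (a : ℕ) (ha : 2 ≤ a) :
    frobZ a = ((a/2 * lucas a : ℕ) : ℤ) - 1 := by
  have hm3 : 3 ≤ lucas a := three_le_lucas a ha
  have hkk : 1 ≤ a/2 := by omega
  have hprod : 3 ≤ a/2 * lucas a := le_trans hm3 (Nat.le_mul_of_pos_left _ hkk)
  set F0 : ℤ := ((a/2 * lucas a : ℕ) : ℤ) - 1 with hF0
  have hbdd : ∀ z ∈ insert (-1 : ℤ) ((fun n : ℕ => (n : ℤ)) '' {x : ℕ | x ∉ Sset a}), z ≤ F0 := by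
    intro z hz
    rcases Set.mem_insert_iff.mp hz with rfl | ⟨x, hx, rfl⟩
    · rw [hF0]; omega
    · simp only [Set.mem_setOf_eq] at hx
      have hxlt : x < a/2 * lucas a := by
        by_contra hc
        push_neg at hc
        exact hx (mem_of_ge a ha x hc)
      have hxlt' : (x:ℤ) < ((a/2 * lucas a : ℕ) : ℤ) := Nat.cast_lt.mpr hxlt
      show (x : ℤ) ≤ F0
      rw [hF0]
      omega
  have hmem : F0 ∈ insert (-1 : ℤ) ((fun n : ℕ => (n : ℤ)) '' {x : ℕ | x ∉ Sset a}) := by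
    right
    refine ⟨a/2 * lucas a - 1, not_mem_frob a ha, ?_⟩
    push_cast [Nat.cast_sub (show 1 ≤ a/2 * lucas a by omega)]
    rw [hF0]
    push_cast
    ring
  refine le_antisymm (csSup_le ⟨-1, Set.mem_insert _ _⟩ hbdd) (le_csSup ⟨F0, hbdd⟩ hmem)


/-- Lower bound for the number of elements of S below the Frobenius number. -/
lemma ncard_lower (a : ℕ) (ha : 2 ≤ a) :
    ltil (2*(a/2)) - 2 ≤ {s : ℕ | s ∈ Sset a ∧ (s:ℤ) < frobZ a}.ncard := by
  classical
  have hm3 : 3 ≤ lucas a := three_le_lucas a ha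
  obtain ⟨k, hk⟩ : ∃ k, a/2 = k + 1 := ⟨a/2 - 1, by omega⟩
  have hl3 : 3 ≤ ltil (2*(a/2)) := by
    have h1 : ltil 2 ≤ ltil (2*(a/2)) := ltil_strictMono.monotone (by omega)
    have h2 : ltil 2 = 3 := rfl
    omega
  have hlm : ltil (2*(a/2)) ≤ lucas a := by
    have h1 : ltil (2*(a/2)) ≤ ltil a := ltil_strictMono.monotone (by omega)
    rw [ltil_eq_lucas a ha] at h1
    exact h1
  set CS := {s : ℕ | s ∈ Sset a ∧ (s:ℤ) < frobZ a} with hCS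
  have hfin : CS.Finite := by
    apply Set.Finite.subset (Set.finite_Iio (a/2 * lucas a))
    intro s hs
    have h2 := hs.2
    rw [frob_eq a ha] at h2
    simp only [Set.mem_Iio]
    by_contra hc
    push_neg at hc
    have : ((a/2 * lucas a : ℕ) : ℤ) ≤ (s:ℤ) := Nat.cast_le.mpr hc
    omega
  set T : Finset ℕ :=
    (Finset.range (ltil (2*(a/2)) - 2)).image (fun t => k * lucas a + t) with hT
  have hTcard : T.card = ltil (2*(a/2)) - 2 := by
    rw [hT, Finset.card_image_of_injective _ (fun x y h => by omega), Finset.card_range]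
  have hsub : (T : Set ℕ) ⊆ CS := by
    intro s hs
    simp only [hT, Finset.coe_image, Finset.coe_range, Set.mem_image, Set.mem_Iio] at hs
    obtain ⟨t, ht, rfl⟩ := hs
    constructor
    · -- membership
      obtain ⟨M, hcard, hparts, hsum⟩ := coverage k t (by
        have hidx : 2*k+2 = 2*(a/2) := by omega
        rw [hidx]
        omega)
      have hparts' : ∀ y ∈ M, ∃ n, y = lucas n := by
        intro y hy
        obtain ⟨i, rfl⟩ := hparts y hy
        exact ltil_eq_lucas_exists i
      have := mem_Sset_of a k M hparts' hcard
      rw [hsum] at this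
      exact this
    · -- below Frobenius
      rw [frob_eq a ha]
      have h1 : k * lucas a + t + 2 ≤ a/2 * lucas a := by
        have h2 : a/2 * lucas a = k * lucas a + lucas a := by
          rw [hk]; ring
        omega
      have h2 : ((k * lucas a + t : ℕ) : ℤ) + 2 ≤ ((a/2 * lucas a : ℕ) : ℤ) := by
        exact_mod_cast h1
      omega
  calc ltil (2*(a/2)) - 2 = T.card := hTcard.symm
    _ = (T : Set ℕ).ncard := (Set.ncard_coe_finset T).symm
    _ ≤ CS.ncard := Set.ncard_le_ncard hsub hfin

/-- Every small irreducible element of S belongs to any generating set X. -/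
lemma mem_X_of_small (a : ℕ) (X : Finset ℕ)
    (hgen : AddSubmonoid.closure (X : Set ℕ) = Sset a)
    (g : ℕ) (hg : g ∈ Sset a) (hg0 : g ≠ 0) (hlt : g < 2 * lucas a) : g ∈ X := by
  have hgc : g ∈ AddSubmonoid.closure (X : Set ℕ) := by rw [hgen]; exact hg
  have hPgen : ∀ x, x ∈ AddSubmonoid.closure (X : Set ℕ) → (x ∈ (X : Set ℕ) ∨ x = 0 ∨
      ∃ u v : ℕ, u ∈ Sset a ∧ v ∈ Sset a ∧ u ≠ 0 ∧ v ≠ 0 ∧ x = u + v) := by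
    intro x hx
    induction hx using AddSubmonoid.closure_induction with
    | mem x hx => exact Or.inl hx
    | zero => exact Or.inr (Or.inl rfl)
    | add u v hu hv pu pv =>
      have huS : u ∈ Sset a := by rw [← hgen]; exact hu
      have hvS : v ∈ Sset a := by rw [← hgen]; exact hv
      rcases Nat.eq_zero_or_pos u with rfl | hu0
      · simpa using pv
      rcases Nat.eq_zero_or_pos v with rfl | hv0
      · simpa using pu
      exact Or.inr (Or.inr ⟨u, v, huS, hvS, by omega, by omega, rfl⟩)
  rcases hPgen g hgc with h | h | ⟨u, v, huS, hvS, hu0, hv0, rfl⟩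
  · exact h
  · omega
  · exfalso
    have h1 := Sset_ge_of_ne_zero a u huS hu0
    have h2 := Sset_ge_of_ne_zero a v hvS hv0
    omega

/-- Any generating set of S a has at least a+1 elements (a ≥ 2). -/
lemma card_X_ge (a : ℕ) (ha : 2 ≤ a) (X : Finset ℕ)
    (hgen : AddSubmonoid.closure (X : Set ℕ) = Sset a) : a + 1 ≤ X.card := by
  classical
  have hm3 : 3 ≤ lucas a := three_le_lucas a ha
  set V : Finset ℕ := insert 0 ((Finset.range a).image ltil) with hV
  have hVcard : V.card = a + 1 := by
    rw [hV, Finset.card_insert_of_notMem, Finset.card_image_of_injective _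
      ltil_strictMono.injective, Finset.card_range]
    intro hc
    obtain ⟨i, _, hi⟩ := Finset.mem_image.mp hc
    have := ltil_pos i
    omega
  have hWX : V.image (fun v => lucas a + v) ⊆ X := by
    intro w hw
    obtain ⟨v, hv, rfl⟩ := Finset.mem_image.mp hw
    have hvlt : v < lucas a := by
      rw [hV] at hv
      rcases Finset.mem_insert.mp hv with rfl | hv
      · omega
      · obtain ⟨i, hi, rfl⟩ := Finset.mem_image.mp hv
        have h1 : ltil i < ltil a := ltil_strictMono (Finset.mem_range.mp hi)
        rw [ltil_eq_lucas a ha] at h1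
        exact h1
    have hvS : lucas a + v ∈ Sset a := by
      rw [hV] at hv
      rcases Finset.mem_insert.mp hv with rfl | hv
      · exact AddSubmonoid.subset_closure (Or.inl (by simp))
      · obtain ⟨i, _, rfl⟩ := Finset.mem_image.mp hv
        obtain ⟨n, hn⟩ := ltil_eq_lucas_exists i
        exact AddSubmonoid.subset_closure (Or.inr ⟨n, by rw [hn]⟩)
    exact mem_X_of_small a X hgen _ hvS (by omega) (by omega)
  calc a + 1 = V.card := hVcard.symm
    _ = (V.image (fun v => lucas a + v)).card :=
        (Finset.card_image_of_injective _ (fun x y h => by omega)).symm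
    _ ≤ X.card := Finset.card_le_card hWX

/-- The key numeric inequality. -/
lemma arith_key (a : ℕ) (ha : 2 ≤ a) :
    a/2 * lucas a ≤ (a+1) * (ltil (2*(a/2)) - 2) := by
  rcases Nat.even_or_odd a with ⟨k, hk⟩ | ⟨k, hk⟩
  · -- a = k + k
    subst hk
    have hk1 : 1 ≤ k := by omega
    have hdiv : (k + k)/2 = k := by omega
    rw [hdiv]
    have i3 : k + k = 2*k := by omega
    have hla : lucas (k + k) = ltil (2*k) := by
      rw [ltil_eq_lucas (2*k) (by omega), i3]
    rw [hla, i3]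
    -- goal: k * ltil (2*k) ≤ (2*k+1) * (ltil (2*k) - 2)
    rcases Nat.eq_or_lt_of_le hk1 with h1 | h2
    · have hke : k = 1 := h1.symm
      subst hke
      decide
    · have hl7 : 7 ≤ ltil (2*k) := by
        have h3 : ltil 4 ≤ ltil (2*k) := ltil_strictMono.monotone (by omega)
        have h4 : ltil 4 = 7 := rfl
        omega
      obtain ⟨l2, hl2⟩ : ∃ l2, ltil (2*k) = l2 + 2 := ⟨ltil (2*k) - 2, by omega⟩
      rw [hl2]
      have e3 : l2 + 2 - 2 = l2 := by omega
      rw [e3]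
      have h6 : k * 2 ≤ k * l2 := Nat.mul_le_mul_left k (by omega)
      have e6 : k * (l2 + 2) = k * l2 + k * 2 := by ring
      have e7 : (2*k + 1) * l2 = k * l2 + k * l2 + l2 := by ring
      rw [e6, e7]
      omega
  · -- a = 2k + 1
    subst hk
    have hk1 : 1 ≤ k := by omega
    have hdiv : (2*k+1)/2 = k := by omega
    rw [hdiv]
    rcases Nat.lt_or_ge k 3 with hk3 | hk3
    · interval_cases k
      · decide
      · decide
    · -- k ≥ 3
      have h0 := ltil_rec' (2*k-1) (by omega)
      have i1 : 2*k-1+2 = 2*k+1 := by omega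
      have i2 : 2*k-1+1 = 2*k := by omega
      rw [i1, i2] at h0
      have h0' := ltil_rec' (2*k-2) (by omega)
      have i4 : 2*k-2+2 = 2*k := by omega
      have i5 : 2*k-2+1 = 2*k-1 := by omega
      rw [i4, i5] at h0'
      have hlu : lucas (2*k+1) = ltil (2*k) + ltil (2*k-1) := by
        rw [← ltil_eq_lucas (2*k+1) (by omega)]
        exact h0
      have hB7 : 7 ≤ ltil (2*k-2) := by
        have h3 : ltil 4 ≤ ltil (2*k-2) := ltil_strictMono.monotone (by omega)
        have h4 : ltil 4 = 7 := rfl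
        omega
      set A := ltil (2*k-1) with hA
      set B := ltil (2*k-2) with hB
      have hApos : 0 < A := ltil_pos _
      rw [hlu, h0']
      -- goal: k * (A + B + A) ≤ (2*k+1+1) * (A + B - 2)
      obtain ⟨C, hC⟩ : ∃ C, A + B = C + 2 := ⟨A + B - 2, by omega⟩
      rw [hC]
      have e8 : C + 2 - 2 = C := by omega
      rw [e8]
      have e5 : k*A + k*B = k*C + 2*k := by
        calc k*A + k*B = k*(A+B) := by ring
          _ = k*(C+2) := by rw [hC]
          _ = k*C + 2*k := by ring
      have h7 : k * 7 ≤ k * B := Nat.mul_le_mul_left k hB7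
      have e6 : k * (C + 2 + A) = k*C + 2*k + k*A := by ring
      have e7 : (2*k+1+1) * C = 2*(k*C) + 2*C := by ring
      rw [e6, e7]
      omega


end WilfHelpers

theorem wilf_S (a : ℕ) (X : Finset ℕ)
    (hgen : AddSubmonoid.closure (X : Set ℕ) = Sset a)
    (hmin : ∀ Y : Finset ℕ, Y ⊂ X → AddSubmonoid.closure (Y : Set ℕ) ≠ Sset a) :
    frobZ a + 1 ≤
      (X.card : ℤ) * ({s : ℕ | s ∈ Sset a ∧ (s : ℤ) < frobZ a}.ncard : ℤ) := by
  rcases Nat.lt_or_ge a 2 with ha2 | ha2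
  · interval_cases a
    · -- a = 0
      have mem2 : (2:ℕ) ∈ Sset 0 := AddSubmonoid.subset_closure (Or.inl rfl)
      have mem3 : (3:ℕ) ∈ Sset 0 := AddSubmonoid.subset_closure (Or.inr ⟨1, rfl⟩)
      have hall : ∀ x : ℕ, 2 ≤ x → x ∈ Sset 0 := by
        intro x hx
        rcases Nat.even_or_odd x with ⟨c, hc⟩ | ⟨c, hc⟩
        · have h1 := AddSubmonoid.nsmul_mem (S := Sset 0) mem2 c
          have h2 : c • (2:ℕ) = x := by simp [smul_eq_mul]; omega
          rwa [h2] at h1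
        · have h1 := AddSubmonoid.nsmul_mem (S := Sset 0) mem2 (c - 1)
          have h2 := AddSubmonoid.add_mem _ mem3 h1
          have h3 : 3 + (c-1) • (2:ℕ) = x := by simp [smul_eq_mul]; omega
          rwa [h3] at h2
      have not1 : (1:ℕ) ∉ Sset 0 := by
        intro h
        have := Sset_ge_of_ne_zero 0 1 h (by omega)
        have h2 : lucas 0 = 2 := rfl
        omega
      have hfrob : frobZ 0 = 1 := by
        have hbdd : ∀ z ∈ insert (-1 : ℤ) ((fun n : ℕ => (n : ℤ)) '' {x : ℕ | x ∉ Sset 0}),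
            z ≤ 1 := by
          intro z hz
          rcases Set.mem_insert_iff.mp hz with rfl | ⟨x, hx, rfl⟩
          · omega
          · simp only [Set.mem_setOf_eq] at hx
            have : x ≤ 1 := by
              by_contra hc
              push_neg at hc
              exact hx (hall x (by omega))
            show (x : ℤ) ≤ 1
            exact_mod_cast this
        have hmem : (1:ℤ) ∈ insert (-1 : ℤ) ((fun n : ℕ => (n : ℤ)) '' {x : ℕ | x ∉ Sset 0}) :=
          Or.inr ⟨1, not1, rfl⟩
        exact le_antisymm (csSup_le ⟨-1, Set.mem_insert _ _⟩ hbdd) (le_csSup ⟨1, hbdd⟩ hmem)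
      have hCS : {s : ℕ | s ∈ Sset 0 ∧ (s : ℤ) < frobZ 0} = {0} := by
        ext s
        simp only [Set.mem_setOf_eq, Set.mem_singleton_iff, hfrob]
        constructor
        · rintro ⟨hs, hlt⟩
          by_contra hc
          have := Sset_ge_of_ne_zero 0 s hs hc
          have h2 : lucas 0 = 2 := rfl
          have : (2:ℤ) ≤ (s:ℤ) := by exact_mod_cast h2 ▸ this
          omega
        · rintro rfl
          exact ⟨AddSubmonoid.zero_mem _, by norm_num⟩
      have hX2 : 2 ≤ X.card := by
        have h2 : (2:ℕ) ∈ X := mem_X_of_small 0 X hgen 2 mem2 (by omega) (by norm_num [lucas])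
        have h3 : (3:ℕ) ∈ X := mem_X_of_small 0 X hgen 3 mem3 (by omega) (by norm_num [lucas])
        have : ({2, 3} : Finset ℕ) ⊆ X := by
          intro z hz
          rcases Finset.mem_insert.mp hz with rfl | hz
          · exact h2
          · rw [Finset.mem_singleton.mp hz]; exact h3
        calc 2 = ({2,3} : Finset ℕ).card := by decide
          _ ≤ X.card := Finset.card_le_card this
      rw [hCS, hfrob]
      simp only [Set.ncard_singleton]
      push_cast
      have : (2:ℤ) ≤ (X.card : ℤ) := by exact_mod_cast hX2
      linarith
    · -- a = 1
      have h1 : (1:ℕ) ∈ Sset 1 := AddSubmonoid.subset_closure (Or.inl rfl)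
      have hall : ∀ x : ℕ, x ∈ Sset 1 := by
        intro x
        have := AddSubmonoid.nsmul_mem (S := Sset 1) h1 x
        simpa [smul_eq_mul] using this
      have hempty : {x : ℕ | x ∉ Sset 1} = ∅ := by
        ext x; simp [hall x]
      have hfrob : frobZ 1 = -1 := by
        rw [frobZ, hempty]
        simp
      rw [hfrob]
      have h0 : (-1:ℤ) + 1 = 0 := by ring
      rw [h0]
      positivity
  · -- a ≥ 2
    have h1 := card_X_ge a ha2 X hgen
    have h2 := ncard_lower a ha2
    have h3 := arith_key a ha2
    have h4 : a/2 * lucas a ≤ X.card * {s : ℕ | s ∈ Sset a ∧ (s : ℤ) < frobZ a}.ncard :=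
      le_trans h3 (Nat.mul_le_mul h1 h2)
    have h5 : ((a/2 * lucas a : ℕ) : ℤ) ≤
        (X.card : ℤ) * ({s : ℕ | s ∈ Sset a ∧ (s : ℤ) < frobZ a}.ncard : ℤ) := by
      exact_mod_cast h4
    calc frobZ a + 1 = ((a/2 * lucas a : ℕ) : ℤ) := by rw [frob_eq a ha2]; ring
      _ ≤ _ := h5
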